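/- Second derivative relation (Corollary 1, single mode): if C(τ) = −α η² [(1/(2c)+1/γ)e^{cτ} + (1/(2d)+1/γ)e^{dτ}] is the angle autocorrelation of a stable mode, then d²C/dτ²(τ) = −(α/(2γ)) η (c e^{cτ} − d e^{dτ}), which equals −(α/(2γ)) times the frequency impulse response of that mode. -/

import Mathlib

open Complex

lemma expDeriv (c : ℂ) (τ : ℝ) :
    HasDerivAt (fun t : ℝ => Complex.exp (c * t)) (c * Complex.exp (c * τ)) τ := by
  have h : HasDerivAt (fun z : ℂ => Complex.exp (c * z)) (c * Complex.exp (c * τ)) (τ : ℂ) := by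
    have h1 : HasDerivAt (fun z : ℂ => c * z) c (τ : ℂ) := by
      simpa using (hasDerivAt_id (τ : ℂ)).const_mul c
    simpa [mul_comm, Function.comp_def] using (Complex.hasDerivAt_exp (c * τ)).comp (τ : ℂ) h1
  exact h.comp_ofReal

lemma derivFormula (A B c d : ℂ) :
    deriv (fun τ : ℝ => A * Complex.exp (c * τ) + B * Complex.exp (d * τ))
      = fun τ : ℝ => A * c * Complex.exp (c * τ) + B * d * Complex.exp (d * τ) := by
  funext τ
  have h : HasDerivAt (fun τ : ℝ => A * Complex.exp (c * τ) + B * Complex.exp (d * τ))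
      (A * c * Complex.exp (c * τ) + B * d * Complex.exp (d * τ)) τ := by
    have := ((expDeriv c τ).const_mul A).add ((expDeriv d τ).const_mul B)
    exact this.congr_deriv (by ring)
  exact h.deriv

/-- Corollary 1 (single mode): the second derivative of the angle autocorrelation
C(τ) = -αη²[(1/(2c)+1/γ)e^{cτ} + (1/(2d)+1/γ)e^{dτ}] satisfies
C''(τ) = -(α/(2γ)) η (c e^{cτ} - d e^{dτ}), i.e., -(α/(2γ)) times the mode's frequency
impulse response. -/
theorem stmt13 (γ α : ℝ) (hγ : 0 < γ) (hα : 0 < α)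
    (c d η : ℂ) (hcre : c.re < 0) (hdre : d.re < 0)
    (hsum : c + d = -(γ : ℂ)) (hdiff : c - d = 1 / η) (hη : η ≠ 0)
    (C : ℝ → ℂ)
    (hC : ∀ τ : ℝ, C τ = -(α : ℂ) * η ^ 2 *
      ((1 / (2 * c) + 1 / (γ : ℂ)) * Complex.exp (c * τ)
        + (1 / (2 * d) + 1 / (γ : ℂ)) * Complex.exp (d * τ))) :
    ∀ τ : ℝ, deriv (deriv C) τ
      = -((α : ℂ) / (2 * γ)) * (η * (c * Complex.exp (c * τ) - d * Complex.exp (d * τ))) := by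
  intro τ
  have hc0 : c ≠ 0 := fun h => by simp [h] at hcre
  have hd0 : d ≠ 0 := fun h => by simp [h] at hdre
  have hγ0 : (γ : ℂ) ≠ 0 := by exact_mod_cast hγ.ne'
  set A : ℂ := -(α : ℂ) * η ^ 2 * (1 / (2 * c) + 1 / (γ : ℂ)) with hA
  set B : ℂ := -(α : ℂ) * η ^ 2 * (1 / (2 * d) + 1 / (γ : ℂ)) with hB
  have hCf : C = fun τ : ℝ => A * Complex.exp (c * τ) + B * Complex.exp (d * τ) := by
    funext t; rw [hC t]; ring
  rw [hCf, derivFormula]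
  have h2 : (fun τ : ℝ => A * c * Complex.exp (c * τ) + B * d * Complex.exp (d * τ))
      = fun τ : ℝ => (A * c) * Complex.exp (c * τ) + (B * d) * Complex.exp (d * τ) := rfl
  rw [h2, derivFormula]
  have hηd : η * (c - d) = 1 := by
    rw [hdiff]; field_simp
  have hk1 : η ^ 2 * (2 * c + γ) = η := by
    have h1 : (2 : ℂ) * c + γ = c - d := by linear_combination hsum
    rw [h1]; linear_combination η * hηd
  have hk2 : η ^ 2 * (2 * d + γ) = -η := by
    have h1 : (2 : ℂ) * d + γ = -(c - d) := by linear_combination hsum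
    rw [h1]; linear_combination -η * hηd
  have key1 : A * c * c = -((α : ℂ) / (2 * γ)) * (η * c) := by
    have hA' : A * c * c = -(α : ℂ) * (η ^ 2 * (2 * c + γ)) * c / (2 * γ) := by
      rw [hA]; field_simp; ring
    rw [hA', hk1]; ring
  have key2 : B * d * d = ((α : ℂ) / (2 * γ)) * (η * d) := by
    have hB' : B * d * d = -(α : ℂ) * (η ^ 2 * (2 * d + γ)) * d / (2 * γ) := by
      rw [hB]; field_simp; ring
    rw [hB', hk2]; ring
  linear_combination Complex.exp (c * τ) * key1 + Complex.exp (d * τ) * key2
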